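/- Let (Ω, 𝒫) be a probability space and let X_{j,k}, for j ∈ {1,…,M} and k ∈ ℕ, be independent identically distributed random variables taking values in [0,1] with common mean μ. Fix α > 0, β ≥ 1, δ ∈ (0,1), natural numbers 1 ≤ n_c ≤ n_s ≤ n_t with n_t ≤ β²·n_s, and an agent index j ∈ {1,…,M}. Define S_{j'} := Σ_{k=1}^{n_c} X_{j',k} and T_{j'} := Σ_{k=1}^{n_s} X_{j',k} for each j', U := Σ_{k=1}^{n_t} X_{j,k}, the auxiliary estimates aux_{j'} := (Σ_{j''=1}^{M} S_{j''} + M·(T_{j'} − S_{j'}))/(M·n_s), the common mean com := (Σ_{j''=1}^{M} S_{j''})/(M·n_c), and the local estimate μ̂ := (M·n_s·aux_j + (U − T_j))/(M·n_s + n_t − n_s). Let E be the event that |aux_{j'} − com| ≤ α·√(log(1/δ)/(2·M·n_s)) for every j' ∈ {1,…,M}. Then 𝒫(E ∩ {|μ̂ − μ| > (2α+1)·β·√(log(1/δ)/(2·M·n_t))}) ≤ 2δ. -/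

import Mathlib

open MeasureTheory ProbabilityTheory

lemma gpos {p : ℝ} (hp0 : 0 ≤ p) (hp1 : p ≤ 1) (t : ℝ) : 0 < 1 - p + p * Real.exp t := by
  rcases eq_or_lt_of_le hp0 with h | h
  · simp [← h]
  · nlinarith [Real.exp_pos t, mul_pos h (Real.exp_pos t)]

lemma hoeff_log_bound {p : ℝ} (hp0 : 0 ≤ p) (hp1 : p ≤ 1) (t : ℝ) :
    1 - p + p * Real.exp t ≤ Real.exp (t * p + t ^ 2 / 8) := by
  set g : ℝ → ℝ := fun t => 1 - p + p * Real.exp t with hgdef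
  have hg : ∀ x, 0 < g x := fun x => gpos hp0 hp1 x
  set F : ℝ → ℝ := fun t => Real.log (g t) - t * p - t ^ 2 / 8 with hFdef
  set F' : ℝ → ℝ := fun t => p * Real.exp t / g t - p - t / 4 with hF'def
  have hgd : ∀ x : ℝ, HasDerivAt g (p * Real.exp x) x := by
    intro x
    exact ((Real.hasDerivAt_exp x).const_mul p).const_add (1 - p)
  have hFd : ∀ x : ℝ, HasDerivAt F (F' x) x := by
    intro x
    have h1 : HasDerivAt (fun t => Real.log (g t)) (p * Real.exp x / g x) x :=
      (hgd x).log (hg x).ne'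
    have h2 : HasDerivAt (fun t : ℝ => t * p) p x := by
      simpa using (hasDerivAt_id x).mul_const p
    have h3 : HasDerivAt (fun t : ℝ => t ^ 2 / 8) (x / 4) x := by
      have := (hasDerivAt_pow 2 x).div_const 8
      exact this.congr_deriv (by norm_num <;> ring)
    exact (h1.sub h2).sub h3
  have hF'd : ∀ x : ℝ, HasDerivAt F'
      ((p * Real.exp x * g x - p * Real.exp x * (p * Real.exp x)) / (g x) ^ 2 - 1 / 4) x := by
    intro x
    have h1 : HasDerivAt (fun t => p * Real.exp t / g t)
        ((p * Real.exp x * g x - p * Real.exp x * (p * Real.exp x)) / (g x) ^ 2) x :=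
      ((Real.hasDerivAt_exp x).const_mul p).div (hgd x) (hg x).ne'
    have h3 : HasDerivAt (fun t : ℝ => t / 4) (1 / 4 : ℝ) x := by
      simpa using (hasDerivAt_id x).div_const 4
    exact (h1.sub_const p).sub h3
  have hF'anti : Antitone F' := by
    apply antitone_of_deriv_nonpos (fun x => (hF'd x).differentiableAt)
    intro x
    rw [(hF'd x).deriv]
    have he0 : 0 ≤ p * Real.exp x := mul_nonneg hp0 (Real.exp_pos x).le
    have heg : p * Real.exp x ≤ g x := by
      have : g x = 1 - p + p * Real.exp x := rfl
      nlinarith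
    have hgx := hg x
    rw [sub_nonpos, div_le_iff₀ (by positivity)]
    generalize hG : g x = G at *
    generalize hE : p * Real.exp x = E at *
    nlinarith [sq_nonneg (G - 2 * E)]
  have hF'0 : F' 0 = 0 := by
    simp [hF'def, hgdef]
  have hF0 : F 0 = 0 := by
    simp [hFdef, hgdef]
  have key : ∀ x : ℝ, F x ≤ 0 := by
    intro x
    rcases le_total 0 x with hx | hx
    · have : AntitoneOn F (Set.Ici 0) := by
        apply antitoneOn_of_deriv_nonpos (convex_Ici 0)
          (fun y _ => ((hFd y).differentiableAt).continuousAt.continuousWithinAt)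
          (fun y _ => ((hFd y).differentiableAt).differentiableWithinAt)
        intro y hy
        rw [(hFd y).deriv]
        rw [interior_Ici] at hy
        calc F' y ≤ F' 0 := hF'anti (le_of_lt hy)
        _ = 0 := hF'0
      have := this (Set.self_mem_Ici) (Set.mem_Ici.mpr hx) hx
      rwa [hF0] at this
    · have : MonotoneOn F (Set.Iic 0) := by
        apply monotoneOn_of_deriv_nonneg (convex_Iic 0)
          (fun y _ => ((hFd y).differentiableAt).continuousAt.continuousWithinAt)
          (fun y _ => ((hFd y).differentiableAt).differentiableWithinAt)
        intro y hy
        rw [(hFd y).deriv]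
        rw [interior_Iic] at hy
        calc (0:ℝ) = F' 0 := hF'0.symm
        _ ≤ F' y := hF'anti (le_of_lt hy)
      have := this (Set.mem_Iic.mpr hx) (Set.self_mem_Iic) hx
      rwa [hF0] at this
  have := key t
  have hlog : Real.log (g t) ≤ t * p + t ^ 2 / 8 := by
    simp only [hFdef] at this; linarith
  calc g t = Real.exp (Real.log (g t)) := (Real.exp_log (hg t)).symm
  _ ≤ Real.exp (t * p + t ^ 2 / 8) := Real.exp_le_exp.mpr hlog

lemma integrable_exp_mul_of_range {Ω : Type*} [MeasurableSpace Ω] (P : Measure Ω)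
    [IsProbabilityMeasure P] (X : Ω → ℝ) (hX : Measurable X)
    (hr : ∀ ω, X ω ∈ Set.Icc (0:ℝ) 1) (t : ℝ) :
    Integrable (fun ω => Real.exp (t * X ω)) P := by
  refine Integrable.mono' (integrable_const (Real.exp |t|)) ((hX.const_mul t).exp.aestronglyMeasurable) ?_
  filter_upwards with ω
  rw [Real.norm_eq_abs, Real.abs_exp]
  apply Real.exp_le_exp.mpr
  have h := hr ω
  rcases le_total t 0 with ht | ht
  · calc t * X ω ≤ 0 := mul_nonpos_of_nonpos_of_nonneg ht h.1
    _ ≤ |t| := abs_nonneg t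
  · calc t * X ω ≤ t * 1 := by nlinarith [h.2]
    _ ≤ |t| := by rw [mul_one]; exact le_abs_self t

lemma integrable_of_range {Ω : Type*} [MeasurableSpace Ω] (P : Measure Ω)
    [IsProbabilityMeasure P] (X : Ω → ℝ) (hX : Measurable X)
    (hr : ∀ ω, X ω ∈ Set.Icc (0:ℝ) 1) : Integrable X P := by
  refine Integrable.mono' (integrable_const 1) hX.aestronglyMeasurable ?_
  filter_upwards with ω
  rw [Real.norm_eq_abs, abs_le]
  exact ⟨by linarith [(hr ω).1], (hr ω).2⟩

lemma mgf_single_le {Ω : Type*} [MeasurableSpace Ω] (P : Measure Ω)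
    [IsProbabilityMeasure P] (X : Ω → ℝ) (hX : Measurable X)
    (hr : ∀ ω, X ω ∈ Set.Icc (0:ℝ) 1) (μ : ℝ) (hm : ∫ ω, X ω ∂P = μ) (t : ℝ) :
    mgf X P t ≤ Real.exp (t * μ + t ^ 2 / 8) := by
  have hint : Integrable X P := integrable_of_range P X hX hr
  have hμ0 : 0 ≤ μ := by
    rw [← hm]; exact integral_nonneg fun ω => (hr ω).1
  have hμ1 : μ ≤ 1 := by
    rw [← hm]
    calc ∫ ω, X ω ∂P ≤ ∫ _, (1:ℝ) ∂P := integral_mono hint (integrable_const 1) fun ω => (hr ω).2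
    _ = 1 := by simp
  have hpt : ∀ ω, Real.exp (t * X ω) ≤ 1 + (Real.exp t - 1) * X ω := by
    intro ω
    obtain ⟨h0, h1⟩ := hr ω
    have hc := convexOn_exp.2 (Set.mem_univ (0:ℝ)) (Set.mem_univ t)
      (by linarith : (0:ℝ) ≤ 1 - X ω) h0 (by ring)
    simp only [smul_eq_mul, mul_zero, zero_add, Real.exp_zero, mul_one] at hc
    calc Real.exp (t * X ω) = Real.exp (X ω * t) := by rw [mul_comm]
    _ ≤ 1 - X ω + X ω * Real.exp t := hc
    _ = 1 + (Real.exp t - 1) * X ω := by ring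
  have hbound : mgf X P t ≤ 1 + (Real.exp t - 1) * μ := by
    have h2 : Integrable (fun ω => 1 + (Real.exp t - 1) * X ω) P := by
      exact (integrable_const 1).add (hint.const_mul _)
    calc mgf X P t = ∫ ω, Real.exp (t * X ω) ∂P := rfl
    _ ≤ ∫ ω, (1 + (Real.exp t - 1) * X ω) ∂P :=
        integral_mono (integrable_exp_mul_of_range P X hX hr t) h2 hpt
    _ = 1 + (Real.exp t - 1) * μ := by
        rw [integral_add (integrable_const 1) (hint.const_mul _), MeasureTheory.integral_const_mul, hm]
        simp
  refine hbound.trans ?_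
  have := hoeff_log_bound hμ0 hμ1 t
  calc 1 + (Real.exp t - 1) * μ = 1 - μ + μ * Real.exp t := by ring
  _ ≤ Real.exp (t * μ + t ^ 2 / 8) := this

lemma mgf_sum_le {Ω : Type*} [MeasurableSpace Ω] {P : Measure Ω}
    [IsProbabilityMeasure P] {ι : Type*} (X : ι → Ω → ℝ)
    (hindep : iIndepFun X P) (hmeas : ∀ i, Measurable (X i))
    (hr : ∀ i ω, X i ω ∈ Set.Icc (0:ℝ) 1) (μ : ℝ) (hm : ∀ i, ∫ ω, X i ω ∂P = μ)
    (s : Finset ι) (t : ℝ) :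
    mgf (∑ i ∈ s, X i) P t ≤ Real.exp ((s.card : ℝ) * (t * μ + t ^ 2 / 8)) := by
  rw [hindep.mgf_sum hmeas s]
  have h1 : ∏ i ∈ s, mgf (X i) P t ≤ ∏ i ∈ s, Real.exp (t * μ + t ^ 2 / 8) :=
    Finset.prod_le_prod (fun i _ => mgf_nonneg)
      (fun i _ => mgf_single_le P (X i) (hmeas i) (hr i) μ (hm i) t)
  refine h1.trans_eq ?_
  rw [Finset.prod_const, ← Real.exp_nat_mul]

lemma tail_up {Ω : Type*} [MeasurableSpace Ω] {P : Measure Ω}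
    [IsProbabilityMeasure P] {ι : Type*} (X : ι → Ω → ℝ)
    (hindep : iIndepFun X P) (hmeas : ∀ i, Measurable (X i))
    (hr : ∀ i ω, X i ω ∈ Set.Icc (0:ℝ) 1) (μ : ℝ) (hm : ∀ i, ∫ ω, X i ω ∂P = μ)
    (s : Finset ι) (t c : ℝ) (ht : 0 ≤ t) :
    (P {ω | c ≤ (∑ i ∈ s, X i) ω}).toReal ≤
      Real.exp (-t * c + (s.card : ℝ) * (t * μ + t ^ 2 / 8)) := by
  have hint : Integrable (fun ω => Real.exp (t * (∑ i ∈ s, X i) ω)) P :=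
    hindep.integrable_exp_mul_sum hmeas fun i _ =>
      integrable_exp_mul_of_range P (X i) (hmeas i) (hr i) t
  calc (P {ω | c ≤ (∑ i ∈ s, X i) ω}).toReal
      ≤ Real.exp (-t * c) * mgf (∑ i ∈ s, X i) P t :=
        measure_ge_le_exp_mul_mgf c ht hint
  _ ≤ Real.exp (-t * c) * Real.exp ((s.card : ℝ) * (t * μ + t ^ 2 / 8)) := by
      gcongr
      exact mgf_sum_le X hindep hmeas hr μ hm s t
  _ = _ := by rw [← Real.exp_add]

lemma tail_lo {Ω : Type*} [MeasurableSpace Ω] {P : Measure Ω}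
    [IsProbabilityMeasure P] {ι : Type*} (X : ι → Ω → ℝ)
    (hindep : iIndepFun X P) (hmeas : ∀ i, Measurable (X i))
    (hr : ∀ i ω, X i ω ∈ Set.Icc (0:ℝ) 1) (μ : ℝ) (hm : ∀ i, ∫ ω, X i ω ∂P = μ)
    (s : Finset ι) (t c : ℝ) (ht : t ≤ 0) :
    (P {ω | (∑ i ∈ s, X i) ω ≤ c}).toReal ≤
      Real.exp (-t * c + (s.card : ℝ) * (t * μ + t ^ 2 / 8)) := by
  have hint : Integrable (fun ω => Real.exp (t * (∑ i ∈ s, X i) ω)) P :=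
    hindep.integrable_exp_mul_sum hmeas fun i _ =>
      integrable_exp_mul_of_range P (X i) (hmeas i) (hr i) t
  calc (P {ω | (∑ i ∈ s, X i) ω ≤ c}).toReal
      ≤ Real.exp (-t * c) * mgf (∑ i ∈ s, X i) P t :=
        measure_le_le_exp_mul_mgf c ht hint
  _ ≤ Real.exp (-t * c) * Real.exp ((s.card : ℝ) * (t * μ + t ^ 2 / 8)) := by
      gcongr
      exact mgf_sum_le X hindep hmeas hr μ hm s t
  _ = _ := by rw [← Real.exp_add]


set_option maxHeartbeats 1000000

/-- probabilistic core of Lemma 1.  `M` agents sample a common i.i.d.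
`[0,1]`-valued process with mean `μ`; `n_c ≤ n_s ≤ n_t` are the per-agent sample
counts at the last communication, at the last threshold check, and currently, with
`n_t ≤ β²·n_s`.  On the event that every auxiliary local estimate is within the
threshold `α·√(log(1/δ)/(2Mn_s))` of the common mean, the local estimate `μ̂` of
agent `j` deviates from `μ` by more than `(2α+1)β·√(log(1/δ)/(2Mn_t))` with
probability at most `2δ`. -/
theorem stmt0 {Ω : Type*} [MeasurableSpace Ω] (P : Measure Ω) [IsProbabilityMeasure P]
    (M : ℕ) (hM : 1 ≤ M)
    (X : Fin M → ℕ → Ω → ℝ) (μ : ℝ)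
    (hmeas : ∀ j k, Measurable (X j k))
    (hindep : iIndepFun
      (fun p : Fin M × ℕ => X p.1 p.2) P)
    (hident : ∀ j k j' k', IdentDistrib (X j k) (X j' k') P P)
    (hrange : ∀ j k ω, X j k ω ∈ Set.Icc (0 : ℝ) 1)
    (hmean : ∀ j k, ∫ ω, X j k ω ∂P = μ)
    (α β δ : ℝ) (hα : 0 < α) (hβ : 1 ≤ β) (hδ0 : 0 < δ) (hδ1 : δ < 1)
    (n_c n_s n_t : ℕ) (hnc : 1 ≤ n_c) (hcs : n_c ≤ n_s) (hst : n_s ≤ n_t)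
    (hts : (n_t : ℝ) ≤ β ^ 2 * n_s)
    (j : Fin M)
    (S T : Fin M → Ω → ℝ) (U : Ω → ℝ)
    (aux : Fin M → Ω → ℝ) (com μhat : Ω → ℝ)
    (hS : ∀ j' ω, S j' ω = ∑ k ∈ Finset.range n_c, X j' k ω)
    (hT : ∀ j' ω, T j' ω = ∑ k ∈ Finset.range n_s, X j' k ω)
    (hU : ∀ ω, U ω = ∑ k ∈ Finset.range n_t, X j k ω)
    (haux : ∀ j' ω, aux j' ω =
      ((∑ j'', S j'' ω) + (M : ℝ) * (T j' ω - S j' ω)) / ((M : ℝ) * n_s))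
    (hcom : ∀ ω, com ω = (∑ j'', S j'' ω) / ((M : ℝ) * n_c))
    (hμhat : ∀ ω, μhat ω =
      ((M : ℝ) * n_s * aux j ω + (U ω - T j ω)) / ((M : ℝ) * n_s + n_t - n_s)) :
    P ({ω | ∀ j', |aux j' ω - com ω| ≤ α * Real.sqrt (Real.log (1 / δ) / (2 * M * n_s))} ∩
        {ω | (2 * α + 1) * β * Real.sqrt (Real.log (1 / δ) / (2 * M * n_t))
          < |μhat ω - μ|})
      ≤ ENNReal.ofReal (2 * δ) := by
  classical
  have hM0 : (0:ℝ) < M := by exact_mod_cast hM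
  have hns1 : 1 ≤ n_s := le_trans hnc hcs
  have hns0 : (0:ℝ) < n_s := by exact_mod_cast hns1
  have hnt0 : (0:ℝ) < n_t := by exact_mod_cast le_trans hns1 hst
  have hβ0 : (0:ℝ) ≤ β := by linarith
  set L := Real.log (1 / δ) with hLdef
  have hL : 0 < L := Real.log_pos (by rw [lt_div_iff₀ hδ0]; linarith)
  set A := (M:ℝ) * n_s with hAdef
  have hA : 0 < A := by rw [hAdef]; positivity
  set s : Finset (Fin M × ℕ) :=
    Finset.univ ×ˢ Finset.range n_s ∪ ({j} : Finset (Fin M)) ×ˢ Finset.Ico n_s n_t with hsdef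
  have hdisj : Disjoint ((Finset.univ : Finset (Fin M)) ×ˢ Finset.range n_s)
      (({j} : Finset (Fin M)) ×ˢ Finset.Ico n_s n_t) := by
    rw [Finset.disjoint_left]
    rintro ⟨a, b⟩ hab h2
    simp only [Finset.mem_product, Finset.mem_range, Finset.mem_Ico, Finset.mem_singleton,
      Finset.mem_univ, true_and] at hab h2
    omega
  set N := M * n_s + (n_t - n_s) with hNdef
  have hcard : s.card = N := by
    rw [hsdef, Finset.card_union_of_disjoint hdisj, Finset.card_product, Finset.card_product]
    simp [Finset.card_univ, Nat.card_Ico, hNdef]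
  have hNr : (N:ℝ) = A + ((n_t:ℝ) - n_s) := by
    rw [hNdef, Nat.cast_add, Nat.cast_mul, Nat.cast_sub hst, hAdef]
  have hstR : (n_s:ℝ) ≤ n_t := by exact_mod_cast hst
  have hN0 : (0:ℝ) < N := by rw [hNr]; linarith
  have hAN : A ≤ (N:ℝ) := by rw [hNr]; linarith
  set ε := Real.sqrt (L / (2 * N)) with hεdef
  have hε0 : 0 ≤ ε := Real.sqrt_nonneg _
  have hε2 : ε ^ 2 = L / (2 * N) := Real.sq_sqrt (div_nonneg hL.le (by linarith))
  have hW : ∀ ω, (∑ p ∈ s, (fun p : Fin M × ℕ => X p.1 p.2) p) ω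
      = (∑ j'', T j'' ω) + (U ω - T j ω) := by
    intro ω
    rw [Finset.sum_apply, hsdef, Finset.sum_union hdisj]
    congr 1
    · rw [Finset.sum_product]
      exact Finset.sum_congr rfl fun j'' _ => (hT j'' ω).symm
    · rw [Finset.sum_product, Finset.sum_singleton, hU ω, hT j ω,
        Finset.sum_Ico_eq_sub _ hst]
  set Up : Set Ω := {ω | (N:ℝ) * μ + (N:ℝ) * ε ≤
    (∑ p ∈ s, (fun p : Fin M × ℕ => X p.1 p.2) p) ω} with hUpdef
  set Lo : Set Ω := {ω | (∑ p ∈ s, (fun p : Fin M × ℕ => X p.1 p.2) p) ω ≤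
    (N:ℝ) * μ - (N:ℝ) * ε} with hLodef
  have hcardR : (s.card : ℝ) = (N : ℝ) := by exact_mod_cast congrArg Nat.cast hcard
  have hNL : 2 * (N:ℝ) * ε ^ 2 = L := by
    rw [hε2]; field_simp
  have hexpδ : Real.exp (-(2 * (N:ℝ) * ε ^ 2)) = δ := by
    rw [hNL, hLdef, one_div, Real.log_inv, neg_neg, Real.exp_log hδ0]
  have hup : P Up ≤ ENNReal.ofReal δ := by
    have h := tail_up (fun p : Fin M × ℕ => X p.1 p.2) hindep
      (fun p => hmeas p.1 p.2) (fun p ω => hrange p.1 p.2 ω) μ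
      (fun p => hmean p.1 p.2) s (4 * ε) ((N:ℝ) * μ + (N:ℝ) * ε) (by positivity)
    rw [hcardR] at h
    have heq : -(4 * ε) * ((N:ℝ) * μ + (N:ℝ) * ε)
        + (N:ℝ) * (4 * ε * μ + (4 * ε) ^ 2 / 8) = -(2 * (N:ℝ) * ε ^ 2) := by ring
    rw [heq, hexpδ] at h
    rw [← ENNReal.ofReal_toReal (measure_ne_top P Up)]
    exact ENNReal.ofReal_le_ofReal h
  have hlo : P Lo ≤ ENNReal.ofReal δ := by
    have h := tail_lo (fun p : Fin M × ℕ => X p.1 p.2) hindep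
      (fun p => hmeas p.1 p.2) (fun p ω => hrange p.1 p.2 ω) μ
      (fun p => hmean p.1 p.2) s (-(4 * ε)) ((N:ℝ) * μ - (N:ℝ) * ε)
      (neg_nonpos.mpr (by positivity))
    rw [hcardR] at h
    have heq : -(-(4 * ε)) * ((N:ℝ) * μ - (N:ℝ) * ε)
        + (N:ℝ) * (-(4 * ε) * μ + (-(4 * ε)) ^ 2 / 8) = -(2 * (N:ℝ) * ε ^ 2) := by ring
    rw [heq, hexpδ] at h
    rw [← ENNReal.ofReal_toReal (measure_ne_top P Lo)]
    exact ENNReal.ofReal_le_ofReal h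
  have hsub : ({ω | ∀ j', |aux j' ω - com ω| ≤ α * Real.sqrt (L / (2 * M * n_s))} ∩
      {ω | (2 * α + 1) * β * Real.sqrt (L / (2 * M * n_t)) < |μhat ω - μ|}) ⊆ Up ∪ Lo := by
    rintro ω ⟨hE, hB⟩
    simp only [Set.mem_setOf_eq] at hE hB
    by_contra hn
    simp only [Set.mem_union, hUpdef, hLodef, Set.mem_setOf_eq, not_or, not_le] at hn
    obtain ⟨h1, h2⟩ := hn
    rw [hW ω] at h1 h2
    set Wv := (∑ j'', T j'' ω) + (U ω - T j ω) with hWvdef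
    set CIs := Real.sqrt (L / (2 * M * n_s)) with hCIsdef
    set CIt := Real.sqrt (L / (2 * M * n_t)) with hCItdef
    have hCIs0 : 0 ≤ CIs := Real.sqrt_nonneg _
    have hCIt0 : 0 ≤ CIt := Real.sqrt_nonneg _
    have hT' : (M:ℝ) * (∑ j'', T j'' ω) = A * (∑ j'', aux j'' ω) := by
      have hsum : ∑ j'', aux j'' ω = (M:ℝ) * (∑ j'', T j'' ω) / A := by
        simp only [haux]
        rw [← Finset.sum_div]
        congr 1
        rw [Finset.sum_add_distrib, Finset.sum_const, Finset.card_univ, Fintype.card_fin,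
          ← Finset.mul_sum, nsmul_eq_mul, Finset.sum_sub_distrib]
        ring
      rw [hsum]
      field_simp
    have key : (A * aux j ω - ∑ j'', T j'' ω) * M
        = A * (∑ j'', (aux j ω - aux j'' ω)) := by
      rw [Finset.sum_sub_distrib, Finset.sum_const, Finset.card_univ, Fintype.card_fin,
        nsmul_eq_mul]
      linear_combination -hT'
    have hdiff : ∀ j', |aux j ω - aux j' ω| ≤ 2 * (α * CIs) := by
      intro j'
      calc |aux j ω - aux j' ω| ≤ |aux j ω - com ω| + |com ω - aux j' ω| :=
        abs_sub_le _ _ _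
      _ ≤ α * CIs + α * CIs := by
          refine add_le_add (hE j) ?_
          rw [abs_sub_comm]
          exact hE j'
      _ = 2 * (α * CIs) := by ring
    have habs : |A * aux j ω - ∑ j'', T j'' ω| ≤ A * (2 * (α * CIs)) := by
      have heq : A * aux j ω - ∑ j'', T j'' ω
          = (A * (∑ j'', (aux j ω - aux j'' ω))) / M := by
        rw [eq_div_iff hM0.ne']
        exact key
      rw [heq, abs_div, abs_of_pos hM0, abs_mul, abs_of_pos hA, div_le_iff₀ hM0]
      have hsb : |∑ j'', (aux j ω - aux j'' ω)| ≤ (M:ℝ) * (2 * (α * CIs)) := by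
        calc |∑ j'', (aux j ω - aux j'' ω)| ≤ ∑ j'', |aux j ω - aux j'' ω| :=
          Finset.abs_sum_le_sum_abs _ _
        _ ≤ ∑ _j'' : Fin M, 2 * (α * CIs) := Finset.sum_le_sum fun j' _ => hdiff j'
        _ = (M:ℝ) * (2 * (α * CIs)) := by
            rw [Finset.sum_const, Finset.card_univ, Fintype.card_fin, nsmul_eq_mul]
      linarith [mul_le_mul_of_nonneg_left hsb hA.le]
    have hden : A + (n_t:ℝ) - n_s = (N:ℝ) := by rw [hNr]; ring
    have hμW : |μhat ω - Wv / N| ≤ 2 * (α * CIs) := by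
      have heq : μhat ω - Wv / N = (A * aux j ω - ∑ j'', T j'' ω) / N := by
        rw [hμhat ω, hden, hWvdef, div_sub_div_same]
        congr 1
        ring
      rw [heq, abs_div, abs_of_pos hN0, div_le_iff₀ hN0]
      linarith [mul_le_mul_of_nonneg_right hAN (by positivity : (0:ℝ) ≤ 2 * (α * CIs)), habs]
    have hWμ : |Wv / N - μ| ≤ ε := by
      rw [abs_sub_le_iff]
      constructor
      · rw [sub_le_iff_le_add, div_le_iff₀ hN0]
        nlinarith [h1]
      · rw [sub_le_iff_le_add, ← sub_le_iff_le_add', le_div_iff₀ hN0]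
        nlinarith [h2]
    have hCI1 : CIs ≤ β * CIt := by
      have hq : L / (2 * M * n_s) ≤ β ^ 2 * (L / (2 * M * n_t)) := by
        rw [← mul_div_assoc, div_le_div_iff₀ (by positivity) (by positivity)]
        linarith [mul_le_mul_of_nonneg_left hts (by positivity : (0:ℝ) ≤ 2 * M * L)]
      have h : β * CIt = Real.sqrt (β ^ 2 * (L / (2 * M * n_t))) := by
        rw [hCItdef, Real.sqrt_mul (sq_nonneg β), Real.sqrt_sq hβ0]
      rw [h, hCIsdef]
      exact Real.sqrt_le_sqrt hq
    have hCI2 : ε ≤ CIs := by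
      have hMN : (M:ℝ) * n_s ≤ N := by rw [← hAdef]; exact hAN
      have hq2 : L / (2 * N) ≤ L / (2 * M * n_s) := by
        rw [div_le_div_iff₀ (by positivity) (by linarith)]
        linarith [mul_le_mul_of_nonneg_left hMN hL.le]
      rw [hεdef, hCIsdef]
      exact Real.sqrt_le_sqrt hq2
    have hfin : |μhat ω - μ| ≤ (2 * α + 1) * β * CIt := by
      have h3 : ε ≤ β * CIt := le_trans hCI2 hCI1
      calc |μhat ω - μ| ≤ |μhat ω - Wv / N| + |Wv / N - μ| := abs_sub_le _ _ _
      _ ≤ 2 * (α * CIs) + ε := add_le_add hμW hWμ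
      _ ≤ 2 * (α * (β * CIt)) + β * CIt := by linarith [mul_le_mul_of_nonneg_left hCI1 hα.le, h3]
      _ = (2 * α + 1) * β * CIt := by ring
    exact absurd hB (not_lt.mpr hfin)
  calc P ({ω | ∀ j', |aux j' ω - com ω| ≤ α * Real.sqrt (L / (2 * M * n_s))} ∩
      {ω | (2 * α + 1) * β * Real.sqrt (L / (2 * M * n_t)) < |μhat ω - μ|})
      ≤ P (Up ∪ Lo) := measure_mono hsub
  _ ≤ P Up + P Lo := measure_union_le _ _
  _ ≤ ENNReal.ofReal δ + ENNReal.ofReal δ := add_le_add hup hlo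
  _ = ENNReal.ofReal (2 * δ) := by
      rw [← ENNReal.ofReal_add hδ0.le hδ0.le]
      norm_num [two_mul]
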